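/- arXiv:2604.21589 — 4 statements merged into one kernel-verified Lean document; each statement's English description precedes it below -/
import Mathlib

section
/- Let G be a connected plane graph with minimum degree at least 2. Let F_1, …, F_t be the faces of G whose degree is not equal to 4, and set s = Σ_{i=1}^{t} (deg(F_i) − 4). Then n₂(G) + n₃(G) ≥ ⌈(s + n₃(G))/2⌉ + 4, where n_i(G) denotes the number of vertices of G of degree i. -/
open SimpleGraph

/-- Reversal of darts, as a permutation of the darts of a graph. -/
def dartReversal {V : Type*} (G : SimpleGraph V) : Equiv.Perm G.Dart :=
  Function.Involutive.toPerm _ (Dart.symm_involutive (G := G))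

/-- The face-traversal permutation of a rotation system `rot`: the dart following `d` on
the boundary walk of the face to its left is `rot d.symm`. -/
def facePerm {V : Type*} (G : SimpleGraph V) (rot : Equiv.Perm G.Dart) :
    Equiv.Perm G.Dart :=
  (dartReversal G).trans rot

/-- The faces of a rotation system: the orbits of the face-traversal permutation, viewed
as sets of darts.  The degree of a face (the number of edge-occurrences on its boundary
walk) is the number of darts in the orbit, i.e. `F.ncard`; the occurrences of a vertex `w`
on the boundary walk of `F` correspond to the darts `d ∈ F` with tail `d.toProd.1 = w`. -/
def facesOf {V : Type*} (G : SimpleGraph V) (rot : Equiv.Perm G.Dart) :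
    Set (Set G.Dart) :=
  {F | ∃ d : G.Dart, F = {d' | (facePerm G rot).SameCycle d d'}}

/-- The face (orbit of the face-traversal permutation) containing a given dart. -/
def faceOf {V : Type*} (G : SimpleGraph V) (rot : Equiv.Perm G.Dart) (d : G.Dart) :
    Set G.Dart :=
  {d' | (facePerm G rot).SameCycle d d'}

/-- A plane graph structure (planar embedding) on a simple graph `G`, given combinatorially
by a rotation system: a permutation of the darts that fixes tails of darts and whose cycles
are precisely the sets of darts at each vertex, which satisfies Euler's formula (this is
exactly the condition that the embedding determined by the rotation system has genus zero,
i.e. is an embedding in the plane). -/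
structure SimpleGraph.PlaneEmbedding {V : Type*} [Fintype V] (G : SimpleGraph V) where
  /-- the rotation: the next dart (counterclockwise) around the tail vertex -/
  rot : Equiv.Perm G.Dart
  rot_fixes_tail : ∀ d : G.Dart, (rot d).toProd.1 = d.toProd.1
  rot_single_cycle : ∀ d d' : G.Dart, d.toProd.1 = d'.toProd.1 → rot.SameCycle d d'
  /-- Euler's formula, componentwise (components with no edge contribute `1` each, the
  others `2` each); equivalently, every component is embedded with genus zero. -/
  euler : (Fintype.card V : ℤ) - Nat.card G.edgeSet + (facesOf G rot).ncard =
    Nat.card G.ConnectedComponent +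
      Nat.card {C : G.ConnectedComponent //
        ∃ d : G.Dart, G.connectedComponentMk d.toProd.1 = C}

/-- Let `G` be a connected plane graph with minimum degree at least `2`, let
`s = Σ (deg(Fᵢ) − 4)`, the sum running over the faces `Fᵢ` whose degree is not `4`.
Then `n₂(G) + n₃(G) ≥ ⌈(s + n₃(G))/2⌉ + 4`, where `nᵢ(G)` is the number of vertices of
degree `i`. -/
theorem plane_exceptional_faces_low_degree {V : Type*} [Fintype V] (G : SimpleGraph V)
    (E : G.PlaneEmbedding) (hconn : G.Connected)
    (hδ : ∀ v : V, 2 ≤ Nat.card (G.neighborSet v)) :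
    ⌈((∑ᶠ F ∈ {F ∈ facesOf G E.rot | F.ncard ≠ 4}, ((F.ncard : ℚ) - 4)) +
        ({v : V | Nat.card (G.neighborSet v) = 3}.ncard : ℚ)) / 2⌉ + 4 ≤
      ({v : V | Nat.card (G.neighborSet v) = 2}.ncard : ℤ) +
        ({v : V | Nat.card (G.neighborSet v) = 3}.ncard : ℤ) := by

  classical
  haveI : DecidableRel G.Adj := Classical.decRel _
  -- basic facts about faces
  have hface_mem : ∀ d : G.Dart, faceOf G E.rot d ∈ facesOf G E.rot := fun d => ⟨d, rfl⟩
  have hfin : (facesOf G E.rot).Finite := by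
    have : facesOf G E.rot ⊆ Set.range (faceOf G E.rot) := by
      rintro F ⟨d, rfl⟩; exact ⟨d, rfl⟩
    exact (Set.finite_range _).subset this
  set Fs : Finset (Set G.Dart) := hfin.toFinset with hFs
  have hmemFs : ∀ F, F ∈ Fs ↔ F ∈ facesOf G E.rot := fun F => hfin.mem_toFinset
  -- fibers of faceOf
  have hfiber : ∀ d₀ : G.Dart, {d | faceOf G E.rot d = faceOf G E.rot d₀} = faceOf G E.rot d₀ := by
    intro d₀
    ext d
    simp only [Set.mem_setOf_eq]
    constructor
    · intro h
      rw [← h]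
      exact ⟨0, rfl⟩
    · intro h
      ext d'
      simp only [faceOf, Set.mem_setOf_eq]
      exact ⟨fun h' => h.trans h', fun h' => h.symm.trans h'⟩
  -- number of darts = sum of face degrees
  have hcard : Fintype.card G.Dart = ∑ F ∈ Fs, F.ncard := by
    rw [← Finset.card_univ,
      Finset.card_eq_sum_card_fiberwise
        (f := faceOf G E.rot) (t := Fs) (fun d _ => (hmemFs _).2 (hface_mem d))]
    refine Finset.sum_congr rfl fun F hF => ?_
    obtain ⟨d₀, rfl⟩ : ∃ d₀, F = faceOf G E.rot d₀ := (hmemFs F).1 hF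
    rw [Set.ncard_eq_toFinset_card']
    congr 1
    ext d
    simp only [Finset.mem_filter, Finset.mem_univ, true_and, Set.mem_toFinset]
    constructor
    · intro h
      have := hfiber d₀
      rw [← this]
      exact h
    · intro h
      have hd : d ∈ {d | faceOf G E.rot d = faceOf G E.rot d₀} := by rw [hfiber d₀]; exact h
      exact hd
  -- degrees
  have hdeg : ∀ v : V, Nat.card (G.neighborSet v) = G.degree v := by
    intro v
    rw [Nat.card_eq_fintype_card, SimpleGraph.card_neighborSet_eq_degree]
  -- edge count
  set m : ℕ := G.edgeFinset.card with hm
  have hedge : Nat.card G.edgeSet = m := by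
    rw [Nat.card_eq_fintype_card, hm, SimpleGraph.edgeFinset, Set.toFinset_card]
  have hdart : Fintype.card G.Dart = 2 * m := SimpleGraph.dart_card_eq_twice_card_edges G
  -- face count
  set f : ℕ := Fs.card with hf
  have hfaces_card : (facesOf G E.rot).ncard = f := Set.ncard_eq_toFinset_card _ hfin
  -- connectedness facts
  have hV : Nonempty V := hconn.nonempty
  obtain ⟨v₀⟩ := hV
  have hnb : Nonempty (G.neighborSet v₀) := by
    have h2 := hδ v₀
    have : 0 < Nat.card (G.neighborSet v₀) := by omega
    exact (Nat.card_pos_iff.mp this).1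
  obtain ⟨w₀, hw₀⟩ := hnb
  have hdart_ex : Nonempty G.Dart := ⟨⟨(v₀, w₀), hw₀⟩⟩
  have hsub : ∀ C C' : G.ConnectedComponent, C = C' := by
    intro C C'
    obtain ⟨a, rfl⟩ := C.exists_rep
    obtain ⟨b, rfl⟩ := C'.exists_rep
    exact SimpleGraph.ConnectedComponent.sound (hconn.preconnected a b)
  have hC1 : Nat.card G.ConnectedComponent = 1 := by
    haveI : Subsingleton G.ConnectedComponent := ⟨hsub⟩
    haveI : Nonempty G.ConnectedComponent := ⟨G.connectedComponentMk v₀⟩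
    rw [Nat.card_eq_one_iff_unique]
    exact ⟨⟨hsub⟩, ‹_›⟩
  have hC2 : Nat.card {C : G.ConnectedComponent //
      ∃ d : G.Dart, G.connectedComponentMk d.toProd.1 = C} = 1 := by
    haveI : Subsingleton G.ConnectedComponent := ⟨hsub⟩
    obtain ⟨d⟩ := hdart_ex
    rw [Nat.card_eq_one_iff_unique]
    exact ⟨⟨fun a b => Subtype.ext (hsub a.1 b.1)⟩, ⟨⟨_, d, rfl⟩⟩⟩
  -- Euler's formula
  have heuler : (Fintype.card V : ℤ) - m + f = 2 := by
    have := E.euler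
    rw [hedge, hfaces_card, hC1, hC2] at this
    push_cast at this ⊢
    linarith
  -- vertex counts
  set n2 : ℕ := (Finset.univ.filter (fun v => G.degree v = 2)).card with hn2
  set n3 : ℕ := (Finset.univ.filter (fun v => G.degree v = 3)).card with hn3
  have hset2 : {v : V | Nat.card (G.neighborSet v) = 2}.ncard = n2 := by
    rw [Set.ncard_eq_toFinset_card']
    congr 1
    ext v
    rw [Set.mem_toFinset, Set.mem_setOf_eq, hdeg v, Finset.mem_filter]
    simp [SimpleGraph.degree, SimpleGraph.neighborFinset_eq_filter]
  have hset3 : {v : V | Nat.card (G.neighborSet v) = 3}.ncard = n3 := by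
    rw [Set.ncard_eq_toFinset_card']
    congr 1
    ext v
    rw [Set.mem_toFinset, Set.mem_setOf_eq, hdeg v, Finset.mem_filter]
    simp [SimpleGraph.degree, SimpleGraph.neighborFinset_eq_filter]
  -- handshake
  have hhand : ∑ v : V, G.degree v = 2 * m := SimpleGraph.sum_degrees_eq_twice_card_edges G
  -- key vertex inequality : 4n - 2m ≤ 2 n2 + n3
  have hkey : (4 * Fintype.card V : ℤ) - 2 * m ≤ 2 * n2 + n3 := by
    have hpt : ∀ v : V, (4 : ℤ) - G.degree v ≤
        (if G.degree v = 2 then (2 : ℤ) else 0) + (if G.degree v = 3 then (1 : ℤ) else 0) := by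
      intro v
      have h2 : 2 ≤ G.degree v := by rw [← hdeg v]; exact hδ v
      by_cases e2 : G.degree v = 2
      · simp [e2]
      · by_cases e3 : G.degree v = 3
        · simp [e3]
        · have : 4 ≤ G.degree v := by omega
          simp only [e2, e3, if_false]
          push_cast
          omega
    have hsum := Finset.sum_le_sum (fun v (_ : v ∈ Finset.univ) => hpt v)
    have hL : ∑ v : V, ((4 : ℤ) - G.degree v) = 4 * Fintype.card V - 2 * m := by
      rw [Finset.sum_sub_distrib, Finset.sum_const, Finset.card_univ]
      have : ∑ v : V, (G.degree v : ℤ) = ((∑ v : V, G.degree v : ℕ) : ℤ) := by push_cast; rfl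
      rw [this, hhand]
      push_cast
      ring
    have hR : ∑ v : V, ((if G.degree v = 2 then (2 : ℤ) else 0) +
        (if G.degree v = 3 then (1 : ℤ) else 0)) = 2 * n2 + n3 := by
      rw [Finset.sum_add_distrib, ← Finset.sum_filter, ← Finset.sum_filter,
        Finset.sum_const, Finset.sum_const, hn2, hn3]
      push_cast
      ring
    rw [hL, hR] at hsum
    exact hsum
  -- the face sum
  have hS : (∑ᶠ F ∈ {F ∈ facesOf G E.rot | F.ncard ≠ 4}, ((F.ncard : ℚ) - 4)) =
      2 * m - 4 * f := by
    have hsetF : {F ∈ facesOf G E.rot | F.ncard ≠ 4} =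
        ↑(Fs.filter (fun F => F.ncard ≠ 4)) := by
      ext F
      simp [hmemFs]
    rw [hsetF, finsum_mem_coe_finset, Finset.sum_filter]
    have : ∑ F ∈ Fs, (if F.ncard ≠ 4 then ((F.ncard : ℚ) - 4) else 0) =
        ∑ F ∈ Fs, ((F.ncard : ℚ) - 4) := by
      refine Finset.sum_congr rfl fun F _ => ?_
      by_cases h : F.ncard = 4
      · simp [h]
      · simp [h]
    rw [this, Finset.sum_sub_distrib, Finset.sum_const, ← hf]
    have : ∑ F ∈ Fs, ((F.ncard : ℚ)) = ((∑ F ∈ Fs, F.ncard : ℕ) : ℚ) := by push_cast; rfl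
    rw [this, ← hcard, hdart]
    push_cast
    ring
  -- finish
  rw [hset2, hset3, hS]
  have hgoal : (2 * (m : ℚ) - 4 * f + n3) / 2 ≤ ((n2 : ℤ) + (n3 : ℤ) - 4 : ℤ) := by
    have he : ((Fintype.card V : ℚ)) - m + f = 2 := by exact_mod_cast heuler
    have hk : (4 * (Fintype.card V : ℚ)) - 2 * m ≤ 2 * n2 + n3 := by exact_mod_cast hkey
    push_cast
    linarith
  have := Int.ceil_le.mpr hgoal
  omega
end

section
/- Let G be a connected 1-plane graph with n ≥ 3 vertices and m edges. Then m = 3n − 6 − (A(G) + B(G))/2 − (3/4)·C(G). -/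
open SimpleGraph

/-- Given a rotation system `rot` on a graph `H` whose vertices are the true vertices `V`
together with the fake vertices `X` (the crossings), `CrossPair rot x u v` says that the
darts from the fake vertex `x` towards `u` and towards `v` are opposite around `x` (i.e.
the segments `xu` and `xv` are the two halves of one original edge `uv` crossed at `x`). -/
def CrossPair {V X : Type*} {H : SimpleGraph (V ⊕ X)} (rot : Equiv.Perm H.Dart)
    (x : X) (u v : V) : Prop :=
  ∃ d : H.Dart, d.toProd = (Sum.inr x, Sum.inl u) ∧
    (rot (rot d)).toProd = (Sum.inr x, Sum.inl v)

/-- A 1-plane structure on a simple graph `G` (i.e. a 1-planar drawing of `G`, recorded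
combinatorially via its planarization): a plane embedding of a graph `H` on the vertex set
`V ⊕ X`, where `V` are the true vertices of `G` and `X` are the fake vertices (one for each
crossing of the drawing), such that every fake vertex has degree `4` (exactly two edges
cross at each crossing point), fake vertices are pairwise non-adjacent (each edge of `G` is
crossed at most once, so each half-edge at a crossing ends at a true vertex), and the edges
of `G` are exactly the uncrossed edges of `H` between true vertices together with, for each
fake vertex `x`, the two edges joining the two pairs of opposite neighbours of `x` (each
crossed edge of `G` being subdivided by exactly one fake vertex). -/
structure OnePlaneStructure {V X : Type*} [Fintype V] [Fintype X]
    (G : SimpleGraph V) (H : SimpleGraph (V ⊕ X)) where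
  /-- the plane embedding of the planarization `H = G^×` -/
  emb : H.PlaneEmbedding
  fake_degree : ∀ x : X, Nat.card {d : H.Dart // d.toProd.1 = Sum.inr x} = 4
  fake_not_adjacent : ∀ x y : X, ¬ H.Adj (Sum.inr x) (Sum.inr y)
  adj_iff : ∀ u v : V, G.Adj u v ↔
    (H.Adj (Sum.inl u) (Sum.inl v) ∨ ∃ x : X, CrossPair emb.rot x u v)
  uncrossed_not_crossed : ∀ u v : V, H.Adj (Sum.inl u) (Sum.inl v) →
    ∀ x : X, ¬ CrossPair emb.rot x u v
  cross_unique : ∀ (x x' : X) (u v : V),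
    CrossPair emb.rot x u v → CrossPair emb.rot x' u v → x = x'

namespace OnePlaneStructure

variable {V X : Type*} [Fintype V] [Fintype X] {G : SimpleGraph V}
  {H : SimpleGraph (V ⊕ X)}

/-- `a(z)`: the number of incidences, counted with multiplicity, of the fake vertex `z`
with the `4⁺`-faces of the planarization. -/
noncomputable def aVal (S : OnePlaneStructure G H) (z : X) : ℕ :=
  {d : H.Dart | d.toProd.1 = Sum.inr z ∧ 4 ≤ (faceOf H S.emb.rot d).ncard}.ncard

/-- `c(F)`: the number of occurrences of fake vertices on the boundary walk of `F`. -/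
noncomputable def cVal (F : Set H.Dart) : ℕ :=
  {d ∈ F | (d.toProd.1).isRight = true}.ncard

/-- `A(G) = Σ_{z fake} (a(z) − 2)` (as a rational number). -/
noncomputable def AVal (S : OnePlaneStructure G H) : ℚ := ∑ z : X, ((S.aVal z : ℚ) - 2)

/-- `B(G) = Σ_{F : deg(F) ≥ 4} (deg(F)/2 − c(F))`. -/
noncomputable def BVal (S : OnePlaneStructure G H) : ℚ :=
  ∑ᶠ F ∈ {F ∈ facesOf H S.emb.rot | 4 ≤ F.ncard}, ((F.ncard : ℚ) / 2 - cVal F)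

/-- `C(G) = Σ_{F : deg(F) ≥ 4} (deg(F) − 4)`. -/
noncomputable def CVal (S : OnePlaneStructure G H) : ℚ :=
  ∑ᶠ F ∈ {F ∈ facesOf H S.emb.rot | 4 ≤ F.ncard}, ((F.ncard : ℚ) - 4)

end OnePlaneStructure


section PermHelpers

variable {α : Type*}

lemma fixed_zpow (f : Equiv.Perm α) {a : α} (h : f a = a) : ∀ n : ℤ, (f ^ n) a = a := by
  have h' : f⁻¹ a = a := by
    have e : f⁻¹ (f a) = a := Equiv.symm_apply_apply f a
    conv_lhs => rw [← h]; rw [e]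
  intro n
  induction n using Int.induction_on with
  | zero => simp
  | succ k ih => rw [zpow_add_one, Equiv.Perm.mul_apply]; rw [h, ih]
  | pred k ih => rw [zpow_sub_one, Equiv.Perm.mul_apply, h', ih]

lemma sameCycle_fixed (f : Equiv.Perm α) {a b : α} (h : f a = a)
    (hc : f.SameCycle a b) : b = a := by
  obtain ⟨n, rfl⟩ := hc
  exact fixed_zpow f h n

lemma invariant_zpow (f : Equiv.Perm α) {β : Type*} (t : α → β)
    (h : ∀ d, t (f d) = t d) : ∀ (n : ℤ) (d : α), t ((f ^ n) d) = t d := by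
  have h' : ∀ d, t (f⁻¹ d) = t d := fun d => by
    have e : f (f⁻¹ d) = d := Equiv.apply_symm_apply f d
    conv_rhs => rw [← e, h]
  intro n
  induction n using Int.induction_on with
  | zero => simp
  | succ k ih => intro d; rw [zpow_add_one, Equiv.Perm.mul_apply, ih, h]
  | pred k ih => intro d; rw [zpow_sub_one, Equiv.Perm.mul_apply, ih, h']

/-- the orbit of `a` as a set -/
def orbSet (f : Equiv.Perm α) (a : α) : Set α := {b | f.SameCycle a b}

lemma mem_orbSet_self (f : Equiv.Perm α) (a : α) : a ∈ orbSet f a := ⟨0, rfl⟩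

lemma orbSet_eq_of_mem (f : Equiv.Perm α) {a b : α} (h : b ∈ orbSet f a) :
    orbSet f a = orbSet f b := by
  ext c
  exact ⟨fun hc => (Equiv.Perm.SameCycle.symm h).trans hc, fun hc => h.trans hc⟩

lemma orbSet_fixed (f : Equiv.Perm α) {a : α} (h : f a = a) : orbSet f a = {a} := by
  ext b
  simp only [Set.mem_singleton_iff]
  exact ⟨fun hb => sameCycle_fixed f h hb, fun hb => hb ▸ mem_orbSet_self f a⟩

lemma orbSet_coe [Fintype α] [DecidableEq α] (f : Equiv.Perm α) {a : α} (h : f a ≠ a) :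
    ((f.cycleOf a).support : Set α) = orbSet f a := by
  ext b
  simp only [Finset.coe_filter, Set.mem_setOf_eq, Finset.mem_coe,
    Equiv.Perm.mem_support_cycleOf_iff]
  exact ⟨fun hb => hb.1, fun hb => ⟨hb, Equiv.Perm.mem_support.2 h⟩⟩

lemma orbSet_pow_card [Fintype α] [DecidableEq α] (f : Equiv.Perm α) (a : α) :
    (f ^ (orbSet f a).ncard) a = a := by
  by_cases h : f a = a
  · exact Equiv.Perm.pow_apply_eq_self_of_apply_eq_self h _
  · have hc : (orbSet f a).ncard = (f.cycleOf a).support.card := by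
      rw [← orbSet_coe f h, Set.ncard_coe_finset]
    rw [hc]
    refine ((f.isCycleOn_support_cycleOf a).pow_apply_eq ?_).2 dvd_rfl
    rw [Equiv.Perm.mem_support_cycleOf_iff]
    exact ⟨Equiv.Perm.SameCycle.refl _ _, Equiv.Perm.mem_support.2 h⟩

lemma orbSet_exists_pow [Fintype α] [DecidableEq α] (f : Equiv.Perm α) {a b : α}
    (hab : f.SameCycle a b) (h4 : 2 ≤ (orbSet f a).ncard) :
    ∃ i < (orbSet f a).ncard, (f ^ i) a = b := by
  have h : f a ≠ a := by
    intro hf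
    rw [orbSet_fixed f hf, Set.ncard_singleton] at h4
    omega
  have hc : (orbSet f a).ncard = (f.cycleOf a).support.card := by
    rw [← orbSet_coe f h, Set.ncard_coe_finset]
  rw [hc]
  exact hab.exists_pow_eq_of_mem_support (Equiv.Perm.mem_support.2 h)

lemma orbSet_card_ge_three [Fintype α] [DecidableEq α] (f : Equiv.Perm α) (a : α)
    (h1 : f a ≠ a) (h2 : f (f a) ≠ a) : 3 ≤ (orbSet f a).ncard := by
  have hfin : (orbSet f a).Finite := Set.toFinite _
  have hne : (orbSet f a).Nonempty := ⟨a, mem_orbSet_self f a⟩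
  have hpos : 0 < (orbSet f a).ncard := (Set.ncard_pos hfin).mpr hne
  have hk := orbSet_pow_card f a
  rcases Nat.lt_or_ge (orbSet f a).ncard 3 with h | h
  · interval_cases hcc : (orbSet f a).ncard
    · exact absurd (by simpa using hk) h1
    · exact absurd (by simpa [pow_succ] using hk) h2
  · exact h

lemma orbSet_pow_inj [Fintype α] [DecidableEq α] (f : Equiv.Perm α) (a : α)
    (h2 : 2 ≤ (orbSet f a).ncard) {i j : ℕ} (hi : i < (orbSet f a).ncard)
    (hj : j < (orbSet f a).ncard) (hij : (f ^ i) a = (f ^ j) a) : i = j := by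
  have h : f a ≠ a := fun hf => by
    rw [orbSet_fixed f hf, Set.ncard_singleton] at h2; omega
  have hc : (orbSet f a).ncard = (f.cycleOf a).support.card := by
    rw [← orbSet_coe f h, Set.ncard_coe_finset]
  have ha : a ∈ (f.cycleOf a).support :=
    Equiv.Perm.mem_support_cycleOf_iff.mpr ⟨.refl _ _, Equiv.Perm.mem_support.2 h⟩
  have hm := ((f.isCycleOn_support_cycleOf a).pow_apply_eq_pow_apply ha).1 hij
  rw [hc] at hi hj
  rw [Nat.ModEq, Nat.mod_eq_of_lt hi, Nat.mod_eq_of_lt hj] at hm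
  exact hm

lemma pow2_apply {α : Type*} (f : Equiv.Perm α) (d : α) : (f ^ 2) d = f (f d) := by
  simp [pow_succ]

end PermHelpers

section RotHelpers

variable {V X : Type*} [Fintype V] [Fintype X] {G : SimpleGraph V}
  {H : SimpleGraph (V ⊕ X)} (S : OnePlaneStructure G H)

include S

lemma tail_rot_zpow (n : ℤ) (d : H.Dart) :
    ((S.emb.rot ^ n) d).toProd.1 = d.toProd.1 :=
  invariant_zpow _ (fun d => d.toProd.1) S.emb.rot_fixes_tail n d

lemma tail_rot_pow (n : ℕ) (d : H.Dart) :
    ((S.emb.rot ^ n) d).toProd.1 = d.toProd.1 := by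
  have := tail_rot_zpow S (n : ℤ) d
  rwa [zpow_natCast] at this

lemma darts_at_orbit {x : X} {d : H.Dart} (hd : d.toProd.1 = Sum.inr x) :
    orbSet S.emb.rot d = {d' : H.Dart | d'.toProd.1 = Sum.inr x} := by
  ext d'
  constructor
  · rintro ⟨n, rfl⟩
    simpa [Set.mem_setOf_eq, tail_rot_zpow] using hd
  · intro hd'
    exact S.emb.rot_single_cycle d d' (hd.trans hd'.symm)

lemma ncard_darts_at (x : X) :
    ({d' : H.Dart | d'.toProd.1 = Sum.inr x}).ncard = 4 := by
  rw [← Nat.card_coe_set_eq]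
  exact S.fake_degree x

lemma orb_ncard_four {x : X} {d : H.Dart} (hd : d.toProd.1 = Sum.inr x) :
    (orbSet S.emb.rot d).ncard = 4 := by
  classical
  rw [darts_at_orbit S hd, ncard_darts_at S x]

lemma rot_pow4 [Fintype H.Dart] {x : X} {d : H.Dart} (hd : d.toProd.1 = Sum.inr x) :
    (S.emb.rot ^ 4) d = d := by
  classical
  have h := orbSet_pow_card S.emb.rot d
  rwa [orb_ncard_four S hd] at h

lemma head_true {x : X} {d : H.Dart} (hd : d.toProd.1 = Sum.inr x) :
    ∃ u : V, d.toProd.2 = Sum.inl u := by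
  have hadj := d.adj
  rcases hw : d.toProd.2 with u | y
  · exact ⟨u, rfl⟩
  · rw [hd, hw] at hadj
    exact absurd hadj (S.fake_not_adjacent x y)

lemma exists_dart_at (x : X) : ∃ d : H.Dart, d.toProd.1 = Sum.inr x := by
  by_contra h'
  push_neg at h'
  have : IsEmpty {d : H.Dart // d.toProd.1 = Sum.inr x} := ⟨fun d => h' d.1 d.2⟩
  have h := S.fake_degree x
  rw [Nat.card_of_isEmpty] at h
  exact absurd h (by norm_num)

lemma crossPair_symm [Fintype H.Dart] {x : X} {u v : V}
    (h : CrossPair S.emb.rot x u v) : CrossPair S.emb.rot x v u := by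
  classical
  obtain ⟨d, hd1, hd2⟩ := h
  have hx : d.toProd.1 = Sum.inr x := by rw [hd1]
  refine ⟨S.emb.rot (S.emb.rot d), hd2, ?_⟩
  have h4 : S.emb.rot (S.emb.rot (S.emb.rot (S.emb.rot d))) = d := by
    have := rot_pow4 S hx
    simpa [pow_succ, Equiv.Perm.mul_apply] using this
  rw [h4, hd1]

lemma crossPair_adj {x : X} {u v : V} (h : CrossPair S.emb.rot x u v) :
    G.Adj u v := (S.adj_iff u v).mpr (Or.inr ⟨x, h⟩)

lemma fiber_ncard [Fintype H.Dart] (x : X) :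
    ({e : Sym2 V | ∃ u v, e = s(u, v) ∧ CrossPair S.emb.rot x u v}).ncard = 2 := by
  classical
  obtain ⟨d₀, hd₀⟩ := exists_dart_at S x
  set ρ := S.emb.rot with hρ
  have htail : ∀ i : ℕ, ((ρ ^ i) d₀).toProd.1 = Sum.inr x :=
    fun i => (tail_rot_pow S i d₀).trans hd₀
  have hcard4 : (orbSet ρ d₀).ncard = 4 := orb_ncard_four S hd₀
  obtain ⟨u0, hu0⟩ := head_true S (htail 0)
  obtain ⟨u1, hu1⟩ := head_true S (htail 1)
  obtain ⟨u2, hu2⟩ := head_true S (htail 2)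
  obtain ⟨u3, hu3⟩ := head_true S (htail 3)
  have hdartinj : ∀ i j : ℕ, i < 4 → j < 4 → ((ρ ^ i) d₀).toProd.2 = ((ρ ^ j) d₀).toProd.2 →
      i = j := by
    intro i j hi hj hh
    refine orbSet_pow_inj ρ d₀ (by omega) (by omega) (by omega) ?_
    exact Dart.toProd_injective (Prod.ext ((htail i).trans (htail j).symm) hh)
  have hne : ∀ i j : ℕ, i < 4 → j < 4 → i ≠ j →
      ((ρ ^ i) d₀).toProd.2 ≠ ((ρ ^ j) d₀).toProd.2 :=
    fun i j hi hj hij hh => hij (hdartinj i j hi hj hh)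
  have h4 : (ρ ^ 4) d₀ = d₀ := rot_pow4 S hd₀
  have happ : ∀ i : ℕ, (ρ ^ (i + 1)) d₀ = ρ ((ρ ^ i) d₀) := by
    intro i; rw [pow_succ', Equiv.Perm.mul_apply]
  have hc02 : CrossPair ρ x u0 u2 := by
    refine ⟨d₀, Prod.ext hd₀ (by simpa using hu0), ?_⟩
    have : ρ (ρ d₀) = (ρ ^ 2) d₀ := (pow2_apply ρ d₀).symm
    rw [this]
    exact Prod.ext (htail 2) hu2
  have hc13 : CrossPair ρ x u1 u3 := by
    refine ⟨ρ d₀, ?_, ?_⟩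
    · have h1 : ρ d₀ = (ρ ^ 1) d₀ := by simp
      rw [h1]; exact Prod.ext (htail 1) hu1
    · have : ρ (ρ (ρ d₀)) = (ρ ^ 3) d₀ := by
        rw [show (3:ℕ) = 2 + 1 from rfl, happ 2, pow2_apply]
      rw [this]; exact Prod.ext (htail 3) hu3
  have hmain : {e : Sym2 V | ∃ u v, e = s(u, v) ∧ CrossPair ρ x u v} =
      {s(u0, u2), s(u1, u3)} := by
    ext e
    simp only [Set.mem_setOf_eq, Set.mem_insert_iff, Set.mem_singleton_iff]
    constructor
    · rintro ⟨u, v, rfl, d, hd1, hd2⟩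
      have hxd : d.toProd.1 = Sum.inr x := by rw [hd1]
      have : d ∈ orbSet ρ d₀ := S.emb.rot_single_cycle d₀ d (hd₀.trans hxd.symm)
      obtain ⟨i, hi, hdi⟩ := orbSet_exists_pow ρ this (by omega)
      rw [hcard4] at hi
      have hu : ((ρ ^ i) d₀).toProd.2 = Sum.inl u := by rw [hdi, hd1]
      have hv : ((ρ ^ (i + 2)) d₀).toProd.2 = Sum.inl v := by
        rw [show i + 2 = (i + 1) + 1 from rfl, happ, happ, hdi, hd2]
      interval_cases i
      · have e1 : u = u0 := Sum.inl_injective (hu.symm.trans hu0)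
        have e2 : v = u2 := Sum.inl_injective (hv.symm.trans hu2)
        rw [e1, e2]; exact Or.inl rfl
      · have e1 : u = u1 := Sum.inl_injective (hu.symm.trans hu1)
        have e2 : v = u3 := Sum.inl_injective (hv.symm.trans hu3)
        rw [e1, e2]; exact Or.inr rfl
      · have hv0 : ((ρ ^ 4) d₀).toProd.2 = Sum.inl v := hv
        rw [h4] at hv0
        have hv0' : ((ρ ^ 0) d₀).toProd.2 = Sum.inl v := hv0
        have e1 : u = u2 := Sum.inl_injective (hu.symm.trans hu2)
        have e2 : v = u0 := Sum.inl_injective (hv0'.symm.trans hu0)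
        rw [e1, e2]; exact Or.inl Sym2.eq_swap
      · have hv1 : ((ρ ^ 5) d₀).toProd.2 = Sum.inl v := hv
        have h5 : (ρ ^ 5) d₀ = (ρ ^ 1) d₀ := by
          rw [show (5:ℕ) = 1 + 4 from rfl, pow_add, Equiv.Perm.mul_apply, h4]
        rw [h5] at hv1
        have e1 : u = u3 := Sum.inl_injective (hu.symm.trans hu3)
        have e2 : v = u1 := Sum.inl_injective (hv1.symm.trans hu1)
        rw [e1, e2]; exact Or.inr Sym2.eq_swap
    · rintro (rfl | rfl)
      · exact ⟨u0, u2, rfl, hc02⟩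
      · exact ⟨u1, u3, rfl, hc13⟩
  rw [hmain]
  refine Set.ncard_pair ?_
  intro hEq
  rw [Sym2.eq_iff] at hEq
  rcases hEq with ⟨h01, _⟩ | ⟨h03, _⟩
  · exact hne 0 1 (by omega) (by omega) (by omega) (by rw [hu0, hu1, h01])
  · exact hne 0 3 (by omega) (by omega) (by omega) (by rw [hu0, hu3, h03])

end RotHelpers

section ConnHelpers

variable {V X : Type*} [Fintype V] [Fintype X] {G : SimpleGraph V}
  {H : SimpleGraph (V ⊕ X)} (S : OnePlaneStructure G H)

include S

lemma adj_reach (u v : V) (h : G.Adj u v) : H.Reachable (Sum.inl u) (Sum.inl v) := by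
  rcases (S.adj_iff u v).mp h with h' | ⟨x, d, hd1, hd2⟩
  · exact h'.reachable
  · have h1 : H.Adj (Sum.inr x) (Sum.inl u) := by
      have := d.adj; rw [hd1] at this; exact this
    have h2 : H.Adj (Sum.inr x) (Sum.inl v) := by
      have := (S.emb.rot (S.emb.rot d)).adj; rw [hd2] at this; exact this
    exact (h1.symm.reachable).trans h2.reachable

lemma reach_of_G {u v : V} (h : G.Reachable u v) :
    H.Reachable (Sum.inl u) (Sum.inl v) := by
  obtain ⟨p⟩ := h
  induction p with
  | nil => exact Reachable.refl _
  | cons h _ ih => exact (adj_reach S _ _ h).trans ih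

lemma H_conn (hconn : G.Connected) : H.Connected := by
  obtain ⟨u₀⟩ := hconn.nonempty
  have hreach : ∀ a : V ⊕ X, H.Reachable a (Sum.inl u₀) := by
    intro a
    rcases a with u | x
    · exact reach_of_G S (hconn.preconnected u u₀)
    · obtain ⟨d, hd⟩ := exists_dart_at S x
      obtain ⟨w, hw⟩ := head_true S hd
      have hadj : H.Adj (Sum.inr x) (Sum.inl w) := by
        have := d.adj; rw [hd, hw] at this; exact this
      exact hadj.reachable.trans (reach_of_G S (hconn.preconnected w u₀))
  have : Nonempty (V ⊕ X) := ⟨Sum.inl u₀⟩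
  exact ⟨fun a b => (hreach a).trans (hreach b).symm⟩

lemma exists_dart_H (hconn : G.Connected) (hn : 3 ≤ Fintype.card V) :
    Nonempty H.Dart := by
  obtain ⟨u, v, huv⟩ : ∃ u v, G.Adj u v := by
    have h2 : 1 < Fintype.card V := by omega
    obtain ⟨u, v, hne⟩ := Fintype.exists_pair_of_one_lt_card h2
    obtain ⟨p⟩ := hconn.preconnected u v
    cases p with
    | nil => exact absurd rfl hne
    | cons h _ => exact ⟨_, _, h⟩
  rcases (S.adj_iff u v).mp huv with h' | ⟨x, d, _, _⟩
  · exact ⟨⟨(Sum.inl u, Sum.inl v), h'⟩⟩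
  · exact ⟨d⟩

lemma euler_H (hconn : G.Connected) (hn : 3 ≤ Fintype.card V) :
    (Fintype.card V : ℤ) + Fintype.card X - Nat.card H.edgeSet
      + (facesOf H S.emb.rot).ncard = 2 := by
  have hc := S.emb.euler
  have hHc : H.Connected := H_conn S hconn
  have hsub : Subsingleton H.ConnectedComponent :=
    ⟨fun a b => ConnectedComponent.ind₂
      (fun x y => ConnectedComponent.sound (hHc.preconnected x y)) a b⟩
  obtain ⟨u₀⟩ := hconn.nonempty
  have h1 : Nat.card H.ConnectedComponent = 1 := by
    rw [Nat.card_eq_one_iff_unique]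
    exact ⟨hsub, ⟨H.connectedComponentMk (Sum.inl u₀)⟩⟩
  have h2 : Nat.card {C : H.ConnectedComponent //
      ∃ d : H.Dart, H.connectedComponentMk d.toProd.1 = C} = 1 := by
    rw [Nat.card_eq_one_iff_unique]
    obtain ⟨d⟩ := exists_dart_H S hconn hn
    exact ⟨⟨fun a b => Subtype.ext (Subsingleton.elim a.1 b.1)⟩, ⟨⟨_, d, rfl⟩⟩⟩
  rw [h1, h2] at hc
  rw [Fintype.card_sum] at hc
  push_cast at hc ⊢
  linarith

end ConnHelpers

section FaceDegree

variable {V X : Type*} [Fintype V] [Fintype X] {G : SimpleGraph V}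
  {H : SimpleGraph (V ⊕ X)} (S : OnePlaneStructure G H)

lemma facePerm_apply {rot : Equiv.Perm H.Dart} (d : H.Dart) :
    facePerm H rot d = rot d.symm := rfl

lemma faceOf_eq_orbSet (rot : Equiv.Perm H.Dart) (d : H.Dart) :
    faceOf H rot d = orbSet (facePerm H rot) d := rfl

include S

lemma face_ncard_ge_three [Fintype H.Dart] (hconn : G.Connected)
    (hn : 3 ≤ Fintype.card V) (d : H.Dart) :
    3 ≤ (faceOf H S.emb.rot d).ncard := by
  classical
  set ρ := S.emb.rot with hρ
  set σ := facePerm H ρ with hσ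
  rw [faceOf_eq_orbSet]
  have hA : ∀ e : H.Dart, σ e ≠ e := by
    intro e hq
    rw [facePerm_apply] at hq
    have ht : e.toProd.2 = e.toProd.1 := by
      have h := S.emb.rot_fixes_tail e.symm
      rw [hq] at h
      exact h.symm
    have := e.adj
    rw [ht] at this
    exact H.loopless.irrefl _ this
  refine orbSet_card_ge_three σ d (hA d) ?_
  intro hq
  have hd'1 : (σ d).toProd.1 = d.toProd.2 := S.emb.rot_fixes_tail d.symm
  have hq' : ρ (σ d).symm = d := hq
  have hd1 : d.toProd.1 = (σ d).toProd.2 := by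
    have h := S.emb.rot_fixes_tail (σ d).symm
    rw [hq'] at h
    exact h
  have hds : σ d = d.symm := Dart.toProd_injective (Prod.ext hd'1 hd1.symm)
  have hfix2 : ρ d.symm = d.symm := hds
  have hfix1 : ρ d = d := by
    rw [hds, Dart.symm_symm] at hq'
    exact hq'
  have hat1 : ∀ e : H.Dart, e.toProd.1 = d.toProd.1 → e = d := fun e he =>
    sameCycle_fixed ρ hfix1 (S.emb.rot_single_cycle d e he.symm)
  have hat2 : ∀ e : H.Dart, e.toProd.1 = d.toProd.2 → e = d.symm := fun e he =>
    sameCycle_fixed ρ hfix2 (S.emb.rot_single_cycle d.symm e he.symm)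
  have hadj1 : ∀ w, H.Adj d.toProd.1 w → w = d.toProd.2 := by
    intro w hw
    have := hat1 ⟨(d.toProd.1, w), hw⟩ rfl
    exact congrArg (fun e => e.toProd.2) this
  have hadj2 : ∀ w, H.Adj d.toProd.2 w → w = d.toProd.1 := by
    intro w hw
    have := hat2 ⟨(d.toProd.2, w), hw⟩ rfl
    exact congrArg (fun e => e.toProd.2) this
  have hcl : ∀ (a b : V ⊕ X) (p : H.Walk a b),
      (a = d.toProd.1 ∨ a = d.toProd.2) → (b = d.toProd.1 ∨ b = d.toProd.2) := by
    intro a b p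
    induction p with
    | nil => exact id
    | cons h q ih =>
      intro ha
      apply ih
      rcases ha with rfl | rfl
      · exact Or.inr (hadj1 _ h)
      · exact Or.inl (hadj2 _ h)
  have hall : ∀ w : V ⊕ X, w = d.toProd.1 ∨ w = d.toProd.2 := by
    intro w
    obtain ⟨p⟩ := (H_conn S hconn).preconnected d.toProd.1 w
    exact hcl _ _ p (Or.inl rfl)
  have hsub : (Finset.univ : Finset (V ⊕ X)) ⊆ {d.toProd.1, d.toProd.2} := by
    intro w _
    rcases hall w with h | h <;> simp [h]
  have hcard : Fintype.card (V ⊕ X) ≤ 2 := by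
    calc Fintype.card (V ⊕ X) = (Finset.univ : Finset (V ⊕ X)).card := rfl
    _ ≤ ({d.toProd.1, d.toProd.2} : Finset (V ⊕ X)).card := Finset.card_le_card hsub
    _ ≤ 2 := (Finset.card_insert_le _ _).trans (by simp)
  rw [Fintype.card_sum] at hcard
  omega

end FaceDegree

section EdgeCount

lemma ncard_iUnion_eq_sum {ι β : Type*} [Fintype ι] (g : ι → Set β)
    (hfin : ∀ i, (g i).Finite)
    (hdisj : ∀ i j, i ≠ j → Disjoint (g i) (g j)) :
    (⋃ i, g i).ncard = ∑ i, (g i).ncard := by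
  classical
  have hU : (⋃ i, g i).Finite := Set.finite_iUnion hfin
  have hEq : hU.toFinset = Finset.univ.biUnion (fun i => (hfin i).toFinset) := by
    ext b; simp
  rw [Set.ncard_eq_toFinset_card _ hU, hEq, Finset.card_biUnion]
  · exact Finset.sum_congr rfl fun i _ => (Set.ncard_eq_toFinset_card _ (hfin i)).symm
  · intro i _ j _ hij
    simp only [Finset.disjoint_left, Set.Finite.mem_toFinset]
    exact fun b hb hb' => Set.disjoint_left.mp (hdisj i j hij) hb hb'

variable {V X : Type*} [Fintype V] [Fintype X] {G : SimpleGraph V}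
  {H : SimpleGraph (V ⊕ X)} (S : OnePlaneStructure G H)

include S

lemma crossPair_unique' [Fintype H.Dart] {x y : X} {u v u' v' : V}
    (h : CrossPair S.emb.rot x u v) (h' : CrossPair S.emb.rot y u' v')
    (he : s(u, v) = s(u', v')) : x = y := by
  rw [Sym2.eq_iff] at he
  rcases he with ⟨rfl, rfl⟩ | ⟨rfl, rfl⟩
  · exact S.cross_unique x y u v h h'
  · exact S.cross_unique x y u v h (crossPair_symm S h')

lemma card_edges_G [Fintype H.Dart] :
    Nat.card G.edgeSet =
      ({e : Sym2 V | ∃ u v, e = s(u, v) ∧ H.Adj (Sum.inl u) (Sum.inl v)}).ncard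
        + 2 * Fintype.card X := by
  classical
  set ρ := S.emb.rot with hρ
  set U : Set (Sym2 V) := {e | ∃ u v, e = s(u, v) ∧ H.Adj (Sum.inl u) (Sum.inl v)}
    with hU
  set Cr : Set (Sym2 V) := {e | ∃ u v, e = s(u, v) ∧ ∃ x, CrossPair ρ x u v}
    with hCr
  have hsplit : G.edgeSet = U ∪ Cr := by
    ext e
    induction e with
    | _ u v =>
      rw [SimpleGraph.mem_edgeSet]
      constructor
      · intro h
        rcases (S.adj_iff u v).mp h with h' | ⟨x, hx⟩
        · exact Or.inl ⟨u, v, rfl, h'⟩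
        · exact Or.inr ⟨u, v, rfl, x, hx⟩
      · intro h
        have hadj : ∃ u' v', s(u, v) = s(u', v') ∧ G.Adj u' v' := by
          rcases h with ⟨u', v', he, h'⟩ | ⟨u', v', he, x, hx⟩
          · exact ⟨u', v', he, (S.adj_iff u' v').mpr (Or.inl h')⟩
          · exact ⟨u', v', he, crossPair_adj S hx⟩
        obtain ⟨u', v', he, hadj⟩ := hadj
        rw [Sym2.eq_iff] at he
        rcases he with ⟨rfl, rfl⟩ | ⟨rfl, rfl⟩
        · exact hadj
        · exact hadj.symm
  have hdisj : Disjoint U Cr := by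
    rw [Set.disjoint_left]
    rintro e ⟨u, v, rfl, hH⟩ ⟨u', v', he, x, hx⟩
    rw [Sym2.eq_iff] at he
    rcases he with ⟨rfl, rfl⟩ | ⟨rfl, rfl⟩
    · exact S.uncrossed_not_crossed u v hH x hx
    · exact S.uncrossed_not_crossed u v hH x (crossPair_symm S hx)
  have hCrCard : Cr.ncard = 2 * Fintype.card X := by
    have hCrU : Cr = ⋃ x : X, {e : Sym2 V | ∃ u v, e = s(u, v) ∧ CrossPair ρ x u v} := by
      ext e
      simp only [hCr, Set.mem_setOf_eq, Set.mem_iUnion]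
      constructor
      · rintro ⟨u, v, rfl, x, hx⟩; exact ⟨x, u, v, rfl, hx⟩
      · rintro ⟨x, u, v, rfl, hx⟩; exact ⟨u, v, rfl, x, hx⟩
    rw [hCrU, ncard_iUnion_eq_sum _ (fun x => Set.toFinite _) ?_]
    · rw [Finset.sum_congr rfl fun x _ => fiber_ncard S x]
      simp [Finset.sum_const, mul_comm]
    · intro x y hxy
      rw [Set.disjoint_left]
      rintro e ⟨u, v, rfl, hx⟩ ⟨u', v', he, hy⟩
      exact hxy (crossPair_unique' S hx hy he)
  rw [Nat.card_coe_set_eq, hsplit,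
    Set.ncard_union_eq hdisj (Set.toFinite _) (Set.toFinite _), hCrCard]

lemma card_edges_H [Fintype H.Dart] :
    Nat.card H.edgeSet =
      ({e : Sym2 V | ∃ u v, e = s(u, v) ∧ H.Adj (Sum.inl u) (Sum.inl v)}).ncard
        + 4 * Fintype.card X := by
  classical
  set U : Set (Sym2 V) := {e | ∃ u v, e = s(u, v) ∧ H.Adj (Sum.inl u) (Sum.inl v)}
    with hU
  set TT : Set (Sym2 (V ⊕ X)) :=
    {e | ∃ u v : V, e = s(Sum.inl u, Sum.inl v) ∧ H.Adj (Sum.inl u) (Sum.inl v)}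
    with hTT
  set TF : Set (Sym2 (V ⊕ X)) :=
    {e | ∃ (x : X) (u : V), e = s(Sum.inr x, Sum.inl u) ∧ H.Adj (Sum.inr x) (Sum.inl u)}
    with hTF
  have hsplit : H.edgeSet = TT ∪ TF := by
    ext e
    induction e with
    | _ a b =>
      rw [SimpleGraph.mem_edgeSet]
      constructor
      · intro h
        rcases a with u | x <;> rcases b with v | y
        · exact Or.inl ⟨u, v, rfl, h⟩
        · exact Or.inr ⟨y, u, Sym2.eq_swap.symm ▸ rfl, h.symm⟩
        · exact Or.inr ⟨x, v, rfl, h⟩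
        · exact absurd h (S.fake_not_adjacent x y)
      · rintro (⟨u, v, he, h'⟩ | ⟨x, u, he, h'⟩) <;>
          · rw [← SimpleGraph.mem_edgeSet] at h'
            rw [← SimpleGraph.mem_edgeSet, he]
            exact h'
  have hdisj : Disjoint TT TF := by
    rw [Set.disjoint_left]
    rintro e ⟨u, v, rfl, _⟩ ⟨x, w, he, _⟩
    rw [Sym2.eq_iff] at he
    rcases he with ⟨h1, _⟩ | ⟨_, h2⟩
    · exact absurd h1 (by simp)
    · exact absurd h2 (by simp)
  have hTTcard : TT.ncard = U.ncard := by
    have him : TT = Sym2.map Sum.inl '' U := by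
      ext e
      constructor
      · rintro ⟨u, v, rfl, h⟩
        exact ⟨s(u, v), ⟨u, v, rfl, h⟩, Sym2.map_pair_eq _ _ _⟩
      · rintro ⟨e', ⟨u, v, rfl, h⟩, rfl⟩
        exact ⟨u, v, (Sym2.map_pair_eq _ _ _).symm, h⟩
    rw [him, Set.ncard_image_of_injective _ (Sym2.map.injective Sum.inl_injective)]
  have hTFcard : TF.ncard = 4 * Fintype.card X := by
    set DX : Set H.Dart := {d | ∃ x : X, d.toProd.1 = Sum.inr x} with hDX
    have him : TF = Dart.edge '' DX := by
      ext e
      constructor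
      · rintro ⟨x, u, rfl, h⟩
        exact ⟨⟨(Sum.inr x, Sum.inl u), h⟩, ⟨x, rfl⟩, rfl⟩
      · rintro ⟨d, ⟨x, hx⟩, rfl⟩
        obtain ⟨u, hu⟩ := head_true S hx
        refine ⟨x, u, ?_, ?_⟩
        · show s(d.toProd.1, d.toProd.2) = _
          rw [← hx, ← hu]
        · have := d.adj; rwa [hx, hu] at this
    have hinj : Set.InjOn Dart.edge DX := by
      rintro d ⟨x, hx⟩ d' ⟨x', hx'⟩ he
      rcases (dart_edge_eq_iff d d').mp he with h | h
      · exact h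
      · exfalso
        obtain ⟨u, hu⟩ := head_true S hx'
        have : d.toProd.1 = d'.toProd.2 := by rw [h]; rfl
        rw [hx, hu] at this
        simp at this
    rw [him, Set.ncard_image_of_injOn hinj]
    have hDXU : DX = ⋃ x : X, {d : H.Dart | d.toProd.1 = Sum.inr x} := by
      ext d; simp [hDX]
    rw [hDXU, ncard_iUnion_eq_sum _ (fun x => Set.toFinite _) ?_]
    · rw [Finset.sum_congr rfl fun x _ => ncard_darts_at S x]
      simp [Finset.sum_const, mul_comm]
    · intro x y hxy
      rw [Set.disjoint_left]
      rintro d hx hy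
      rw [Set.mem_setOf_eq] at hx hy
      rw [hx] at hy
      exact hxy (Sum.inr_injective hy)
  rw [Nat.card_coe_set_eq, hsplit,
    Set.ncard_union_eq hdisj (Set.toFinite _) (Set.toFinite _), hTTcard, hTFcard]

end EdgeCount

section OrbitSums

variable {α : Type*} [Fintype α]

lemma mem_orbSet_iff_eq (f : Equiv.Perm α) {a b : α} :
    b ∈ orbSet f a ↔ orbSet f b = orbSet f a :=
  ⟨fun h => (orbSet_eq_of_mem f h).symm, fun h => h ▸ mem_orbSet_self f b⟩

lemma sum_orbits [DecidableEq (Set α)] (f : Equiv.Perm α) (p : α → Prop)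
    [DecidablePred p] :
    ∑ F ∈ Finset.univ.image (orbSet f), ({a ∈ F | p a} : Set α).ncard
      = ({a | p a} : Set α).ncard := by
  classical
  have h := Finset.card_eq_sum_card_fiberwise
    (f := orbSet f) (s := Finset.univ.filter (fun a => p a))
    (t := Finset.univ.image (orbSet f))
    (fun a _ => Finset.mem_image_of_mem _ (Finset.mem_univ a))
  have hR : ({a | p a} : Set α).ncard = (Finset.univ.filter (fun a => p a)).card := by
    rw [Set.ncard_eq_toFinset_card', Set.toFinset_setOf]
  rw [hR, h]
  refine Finset.sum_congr rfl ?_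
  intro F hF
  rw [Set.ncard_eq_toFinset_card']
  congr 1
  ext a
  simp only [Set.mem_toFinset, Set.mem_setOf_eq, Finset.mem_filter, Finset.mem_univ,
    true_and]
  obtain ⟨a₀, _, rfl⟩ := Finset.mem_image.mp hF
  rw [mem_orbSet_iff_eq]
  exact and_comm

lemma sum_orbits_restrict [DecidableEq (Set α)] (f : Equiv.Perm α) (p : α → Prop)
    [DecidablePred p] :
    ∑ F ∈ (Finset.univ.image (orbSet f)).filter (fun F => 4 ≤ F.ncard),
        ({a ∈ F | p a} : Set α).ncard
      = ({a | p a ∧ 4 ≤ (orbSet f a).ncard} : Set α).ncard := by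
  classical
  rw [← sum_orbits f (fun a => p a ∧ 4 ≤ (orbSet f a).ncard), Finset.sum_filter]
  refine Finset.sum_congr rfl ?_
  intro F hF
  obtain ⟨a₀, _, rfl⟩ := Finset.mem_image.mp hF
  by_cases h4 : 4 ≤ (orbSet f a₀).ncard
  · rw [if_pos h4]
    congr 1
    ext a
    simp only [Set.mem_setOf_eq, and_congr_right_iff]
    intro ha
    have := (orbSet_eq_of_mem f ha).symm
    rw [this]
    simp [h4]
  · rw [if_neg h4]
    have : {a ∈ orbSet f a₀ | p a ∧ 4 ≤ (orbSet f a).ncard} = (∅ : Set α) := by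
      ext a
      simp only [Set.mem_setOf_eq, Set.mem_empty_iff_false, iff_false, not_and]
      intro ha hp hcc
      rw [(orbSet_eq_of_mem f ha).symm] at hcc
      exact h4 hcc
    rw [this, Set.ncard_empty]

lemma sum_orbits_ncard [DecidableEq (Set α)] (f : Equiv.Perm α) :
    ∑ F ∈ Finset.univ.image (orbSet f), F.ncard = Fintype.card α := by
  classical
  have h := sum_orbits f (fun _ => True)
  have h1 : ({a : α | True} : Set α).ncard = Fintype.card α := by
    simp [Set.ncard_univ, Nat.card_eq_fintype_card]
  rw [← h1, ← h]
  refine Finset.sum_congr rfl fun F _ => ?_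
  congr 1
  ext a
  simp

end OrbitSums

/-- **Edge-count formula.**  Let `G` be a connected 1-plane graph with `n ≥ 3` vertices and
`m` edges.  Then `m = 3n − 6 − (A(G) + B(G))/2 − (3/4)·C(G)`. -/

theorem edge_count_formula_one_plane {V X : Type*} [Fintype V] [Fintype X]
    (G : SimpleGraph V) (H : SimpleGraph (V ⊕ X)) (S : OnePlaneStructure G H)
    (hconn : G.Connected) (hn : 3 ≤ Fintype.card V) :
    (Nat.card G.edgeSet : ℚ) =
      3 * Fintype.card V - 6 - (S.AVal + S.BVal) / 2 - 3 / 4 * S.CVal := by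
  classical
  letI : DecidableRel H.Adj := Classical.decRel _
  set ρ := S.emb.rot with hρ
  set σ := facePerm H ρ with hσ
  set Fs : Finset (Set H.Dart) := Finset.univ.image (orbSet σ) with hFs
  set Fs4 : Finset (Set H.Dart) := Fs.filter (fun F => 4 ≤ F.ncard) with hFs4
  -- identification of facesOf with Fs
  have hfaces : facesOf H ρ = ↑Fs := by
    ext F
    simp only [facesOf, Set.mem_setOf_eq, hFs, Finset.coe_image, Finset.coe_univ,
      Set.image_univ, Set.mem_range]
    constructor
    · rintro ⟨d, rfl⟩; exact ⟨d, rfl⟩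
    · rintro ⟨d, rfl⟩; exact ⟨d, rfl⟩
  have hfaces4 : {F ∈ facesOf H ρ | 4 ≤ F.ncard} = ↑Fs4 := by
    rw [hfaces, hFs4, Finset.coe_filter]
    ext F; simp
  -- numeric abbreviations
  set n := Fintype.card V with hn'
  set xx := Fintype.card X with hxx
  set uu := ({e : Sym2 V | ∃ u v, e = s(u, v) ∧ H.Adj (Sum.inl u) (Sum.inl v)}).ncard
    with huu
  set s4 := ∑ F ∈ Fs4, F.ncard with hs4
  set c4 := ∑ F ∈ Fs4, OnePlaneStructure.cVal F with hc4
  set f3 := (Fs.filter (fun F => ¬ 4 ≤ F.ncard)).card with hf3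
  -- edge counts
  have hmG : Nat.card G.edgeSet = uu + 2 * xx := card_edges_G S
  have hmH : Nat.card H.edgeSet = uu + 4 * xx := card_edges_H S
  -- Euler
  have heuler : (n : ℤ) + xx - Nat.card H.edgeSet + Fs.card = 2 := by
    have h := euler_H S hconn hn
    rwa [hfaces, Set.ncard_coe_finset] at h
  -- total face-size sum
  have hdartsum : ∑ F ∈ Fs, F.ncard = 2 * Nat.card H.edgeSet := by
    rw [sum_orbits_ncard σ, dart_card_eq_twice_card_edges, edgeFinset_card,
      Nat.card_eq_fintype_card]
  -- all faces have at least 3 darts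
  have h3le : ∀ F ∈ Fs, 3 ≤ F.ncard := by
    intro F hF
    obtain ⟨d, _, rfl⟩ := Finset.mem_image.mp hF
    exact face_ncard_ge_three S hconn hn d
  have hsmall : ∀ F ∈ Fs.filter (fun F => ¬ 4 ≤ F.ncard), F.ncard = 3 := by
    intro F hF
    rw [Finset.mem_filter] at hF
    have := h3le F hF.1
    omega
  have hsplitsum : 3 * f3 + s4 = 2 * Nat.card H.edgeSet := by
    rw [← hdartsum, ← Finset.sum_filter_add_sum_filter_not Fs (fun F => 4 ≤ F.ncard)
      (fun F => F.ncard)]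
    have : ∑ F ∈ Fs.filter (fun F => ¬ 4 ≤ F.ncard), F.ncard = 3 * f3 := by
      rw [Finset.sum_congr rfl hsmall, Finset.sum_const, smul_eq_mul, mul_comm]
    rw [this, hs4, hFs4]
    omega
  have hfsplit : Fs.card = f3 + Fs4.card := by
    rw [hf3, hFs4, add_comm]
    exact (Finset.card_filter_add_card_filter_not _).symm
  -- A(G)
  have haval : ∑ z : X, OnePlaneStructure.aVal S z = c4 := by
    have h1 : (⋃ z : X, {d : H.Dart | d.toProd.1 = Sum.inr z ∧
        4 ≤ (faceOf H ρ d).ncard}) =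
        {d : H.Dart | (d.toProd.1).isRight = true ∧ 4 ≤ (orbSet σ d).ncard} := by
      ext d
      simp only [Set.mem_iUnion, Set.mem_setOf_eq]
      constructor
      · rintro ⟨z, hz, h4⟩
        rw [hz]
        exact ⟨rfl, h4⟩
      · rintro ⟨hr, h4⟩
        rcases hd : d.toProd.1 with w | z
        · rw [hd] at hr; simp at hr
        · exact ⟨z, rfl, h4⟩
    have h2 : ∑ z : X, OnePlaneStructure.aVal S z =
        ({d : H.Dart | (d.toProd.1).isRight = true ∧ 4 ≤ (orbSet σ d).ncard}).ncard := by
      rw [← h1, ncard_iUnion_eq_sum _ (fun z => Set.toFinite _) ?_]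
      · rfl
      · intro z y hzy
        rw [Set.disjoint_left]
        rintro d ⟨h1', _⟩ ⟨h2', _⟩
        rw [h1'] at h2'
        exact hzy (Sum.inr_injective h2')
    rw [h2, hc4, ← sum_orbits_restrict σ (fun d => (d.toProd.1).isRight = true)]
    rfl
  have hA : S.AVal = (c4 : ℚ) - 2 * xx := by
    rw [OnePlaneStructure.AVal, Finset.sum_sub_distrib, Finset.sum_const,
      Finset.card_univ, ← Nat.cast_sum, haval]
    push_cast
    ring
  -- B(G), C(G)
  have hB : S.BVal = (s4 : ℚ) / 2 - c4 := by
    rw [OnePlaneStructure.BVal, hfaces4, finsum_mem_coe_finset,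
      Finset.sum_sub_distrib, ← Finset.sum_div]
    rw [hs4, hc4]
    push_cast
    ring
  have hC : S.CVal = (s4 : ℚ) - 4 * Fs4.card := by
    rw [OnePlaneStructure.CVal, hfaces4, finsum_mem_coe_finset,
      Finset.sum_sub_distrib, Finset.sum_const]
    rw [hs4]
    push_cast
    ring
  -- final arithmetic
  have e1 : (Nat.card H.edgeSet : ℚ) = uu + 4 * xx := by rw [hmH]; push_cast; ring
  have e2 : (Nat.card G.edgeSet : ℚ) = uu + 2 * xx := by rw [hmG]; push_cast; ring
  have e3 : (n : ℚ) + xx - Nat.card H.edgeSet + Fs.card = 2 := by exact_mod_cast heuler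
  have e4 : 3 * (f3 : ℚ) + s4 = 2 * Nat.card H.edgeSet := by exact_mod_cast hsplitsum
  have e5 : (Fs.card : ℚ) = f3 + Fs4.card := by exact_mod_cast hfsplit
  rw [hA, hB, hC, e2]
  linarith
end

section
/- Let G be a K3-free 1-plane graph and let u be an alternating vertex of G, i.e., every face of the planarization G^× incident with u is an alternating 4-face. Then the degree of u in G is at least 4. -/
open SimpleGraph

namespace OnePlaneStructure

variable {V X : Type*} [Fintype V] [Fintype X] {G : SimpleGraph V}
  {H : SimpleGraph (V ⊕ X)}

/-- A face `F` of the planarization is an alternating `4`-face if it has degree `4` and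
true and fake vertices alternate along its boundary walk (the tails of consecutive darts
of the face walk are alternately true and fake). -/
def IsAlternating4Face (S : OnePlaneStructure G H) (F : Set H.Dart) : Prop :=
  F.ncard = 4 ∧ ∀ d ∈ F,
    ((facePerm H S.emb.rot d).toProd.1).isRight ≠ (d.toProd.1).isRight

end OnePlaneStructure

private lemma zpow_preserves_aux {α β : Type*} (ρ : Equiv.Perm α) (t : α → β)
    (h : ∀ a, t (ρ a) = t a) (n : ℤ) (a : α) : t ((ρ ^ n) a) = t a := by
  have hinv : ∀ b, t (ρ⁻¹ b) = t b := by
    intro b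
    have := h (ρ⁻¹ b)
    rw [Equiv.Perm.inv_def, Equiv.apply_symm_apply] at this
    exact this.symm
  induction n using Int.induction_on generalizing a with
  | zero => simp
  | succ k ih =>
    rw [zpow_add_one, Equiv.Perm.mul_apply, ih, h]
  | pred k ih =>
    rw [zpow_sub_one, Equiv.Perm.mul_apply, ih, hinv]

private lemma orbit_ncard_four_pow {α : Type*} [Finite α] (π : Equiv.Perm α) (a : α)
    (h : {b | π.SameCycle a b}.ncard = 4) : π (π (π (π a))) = a := by
  classical
  letI := Fintype.ofFinite α
  by_cases hfix : π a = a
  · rw [hfix, hfix, hfix, hfix]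
  · have hs : ((π.cycleOf a).support : Set α) = {b | π.SameCycle a b} := by
      ext b
      rw [Finset.mem_coe, Equiv.Perm.mem_support_cycleOf_iff]
      simp [Equiv.Perm.mem_support, hfix]
    have hcard : (π.cycleOf a).support.card = 4 := by
      rw [← Set.ncard_coe_finset, hs, h]
    have hc : (π.cycleOf a).IsCycle := Equiv.Perm.isCycle_cycleOf π hfix
    have h4 : orderOf (π.cycleOf a) = 4 := hc.orderOf.trans hcard
    have h1 : (π.cycleOf a) ^ 4 = 1 := h4 ▸ pow_orderOf_eq_one _
    have h2 := Equiv.Perm.cycleOf_pow_apply_self π a 4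
    rw [h1] at h2
    have h3 : (π ^ 4) a = a := by simpa using h2.symm
    simpa [pow_succ, Equiv.Perm.mul_apply] using h3

/-- Let `G` be a `K₃`-free 1-plane graph and let `u` be an alternating vertex of `G`, i.e.
every face of the planarization `G^×` incident with `u` is an alternating `4`-face (note
that every vertex is incident with at least one face).  Then `u` has degree at least `4`
in `G`. -/
theorem k3free_one_plane_alternating_vertex_degree {V X : Type*} [Fintype V] [Fintype X]
    (G : SimpleGraph V) (H : SimpleGraph (V ⊕ X)) (S : OnePlaneStructure G H)
    (hK3 : G.CliqueFree 3) (u : V)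
    (hinc : ∃ F ∈ facesOf H S.emb.rot, ∃ d ∈ F, d.toProd.1 = Sum.inl u)
    (halt : ∀ F ∈ facesOf H S.emb.rot, (∃ d ∈ F, d.toProd.1 = Sum.inl u) →
      S.IsAlternating4Face F) :
    4 ≤ Nat.card (G.neighborSet u) := by
  classical
  haveI : Finite H.Dart := Finite.of_injective _ (SimpleGraph.Dart.toProd_injective)
  have hσ : ∀ f : H.Dart, facePerm H S.emb.rot f = S.emb.rot f.symm := fun f => rfl
  have htail : ∀ f : H.Dart, (S.emb.rot f).toProd.1 = f.toProd.1 := S.emb.rot_fixes_tail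
  have htailσ : ∀ f : H.Dart, ((facePerm H S.emb.rot) f).toProd.1 = f.toProd.2 := by
    intro f
    rw [hσ, htail]
    simp
  -- rot⁴ = id at fake vertices
  have hrot4 : ∀ (f : H.Dart) (x : X), f.toProd.1 = Sum.inr x →
      S.emb.rot (S.emb.rot (S.emb.rot (S.emb.rot f))) = f := by
    intro f x hf
    apply orbit_ncard_four_pow
    have hset : {b | S.emb.rot.SameCycle f b} = {d : H.Dart | d.toProd.1 = Sum.inr x} := by
      ext b
      constructor
      · rintro ⟨n, rfl⟩
        show ((S.emb.rot ^ n) f).toProd.1 = Sum.inr x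
        rw [zpow_preserves_aux S.emb.rot (fun d => d.toProd.1) htail, hf]
      · intro hb
        exact S.emb.rot_single_cycle f b (by rw [hf, hb])
    rw [hset]
    exact (Nat.card_coe_set_eq _).symm.trans (S.fake_degree x)
  -- faces at u are alternating 4-faces
  have hface : ∀ d : H.Dart, d.toProd.1 = Sum.inl u →
      S.IsAlternating4Face (faceOf H S.emb.rot d) := by
    intro d hd
    exact halt _ ⟨d, rfl⟩ ⟨d, Equiv.Perm.SameCycle.refl _ _, hd⟩
  have hσ4 : ∀ d : H.Dart, d.toProd.1 = Sum.inl u →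
      (facePerm H S.emb.rot) ((facePerm H S.emb.rot) ((facePerm H S.emb.rot)
        ((facePerm H S.emb.rot) d))) = d := by
    intro d hd
    exact orbit_ncard_four_pow _ d (hface d hd).1
  have haltd : ∀ d : H.Dart, d.toProd.1 = Sum.inl u →
      (((facePerm H S.emb.rot) d).toProd.1).isRight = true ∧
      ∃ w : V, ((facePerm H S.emb.rot) ((facePerm H S.emb.rot) d)).toProd.1 = Sum.inl w := by
    intro d hd
    have h0 := (hface d hd).2 d (Equiv.Perm.SameCycle.refl _ _)
    have h1 := (hface d hd).2 ((facePerm H S.emb.rot) d)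
      (Equiv.Perm.sameCycle_apply_right.mpr (Equiv.Perm.SameCycle.refl _ _))
    rw [hd] at h0
    simp only [Sum.isRight_inl] at h0
    have hr : (((facePerm H S.emb.rot) d).toProd.1).isRight = true := by
      cases hsr : (((facePerm H S.emb.rot) d).toProd.1).isRight
      · exact absurd hsr h0
      · rfl
    refine ⟨hr, ?_⟩
    rw [hr] at h1
    cases h2 : ((facePerm H S.emb.rot) ((facePerm H S.emb.rot) d)).toProd.1 with
    | inl w => exact ⟨w, rfl⟩
    | inr y => rw [h2] at h1; simp at h1
  -- head of a dart at u is fake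
  have hheadfake : ∀ d : H.Dart, d.toProd.1 = Sum.inl u → ∃ x : X,
      d.toProd.2 = Sum.inr x := by
    intro d hd
    have hr := (haltd d hd).1
    rw [htailσ] at hr
    exact Sum.isRight_iff.mp hr
  -- the key geometric lemma: the edge crossed at the fake head of d joins the opposite
  -- vertices of the two faces at u adjacent to d
  have key : ∀ d : H.Dart, d.toProd.1 = Sum.inl u →
      ∃ (x : X) (w w' : V), d.toProd.2 = Sum.inr x ∧
        ((facePerm H S.emb.rot) ((facePerm H S.emb.rot) d)).toProd.1 = Sum.inl w ∧
        ((facePerm H S.emb.rot) ((facePerm H S.emb.rot) (S.emb.rot d))).toProd.1 = Sum.inl w' ∧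
        CrossPair S.emb.rot x w w' := by
    intro d hd
    obtain ⟨x, hx⟩ := hheadfake d hd
    obtain ⟨_, w, hw⟩ := haltd d hd
    have hd' : (S.emb.rot d).toProd.1 = Sum.inl u := by rw [htail, hd]
    obtain ⟨_, w', hw'⟩ := haltd (S.emb.rot d) hd'
    refine ⟨x, w, w', hx, hw, hw', ?_⟩
    have he0p : d.symm.toProd = (Sum.inr x, Sum.inl u) := by
      rw [Prod.ext_iff]
      exact ⟨by simpa using hx, by simpa using hd⟩
    have hσe0 : (facePerm H S.emb.rot) d.symm = S.emb.rot d := by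
      rw [hσ, SimpleGraph.Dart.symm_symm]
    have h4 := hσ4 (S.emb.rot d) hd'
    have he0eq : d.symm = (facePerm H S.emb.rot) ((facePerm H S.emb.rot)
        ((facePerm H S.emb.rot) (S.emb.rot d))) :=
      (facePerm H S.emb.rot).injective (by rw [hσe0, h4])
    have hrot4e0 : S.emb.rot (S.emb.rot (S.emb.rot (S.emb.rot d.symm))) = d.symm :=
      hrot4 d.symm x (by rw [he0p])
    have he1 : S.emb.rot d.symm = (facePerm H S.emb.rot) d := (hσ d).symm
    have he3 : S.emb.rot (S.emb.rot (S.emb.rot d.symm)) =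
        ((facePerm H S.emb.rot) ((facePerm H S.emb.rot) (S.emb.rot d))).symm := by
      apply S.emb.rot.injective
      rw [hrot4e0, ← hσ]
      exact he0eq
    have he1p : (S.emb.rot d.symm).toProd = (Sum.inr x, Sum.inl w) := by
      rw [Prod.ext_iff]
      constructor
      · rw [htail]
        rw [he0p]
      · rw [he1, ← htailσ ((facePerm H S.emb.rot) d), hw]
    have he3p : (S.emb.rot (S.emb.rot (S.emb.rot d.symm))).toProd =
        (Sum.inr x, Sum.inl w') := by
      rw [he3, Prod.ext_iff]
      constructor
      · show ((facePerm H S.emb.rot) ((facePerm H S.emb.rot) (S.emb.rot d))).toProd.2 = Sum.inr x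
        rw [← htailσ, ← he0eq]
        rw [he0p]
      · show ((facePerm H S.emb.rot) ((facePerm H S.emb.rot) (S.emb.rot d))).toProd.1 = Sum.inl w'
        exact hw'
    exact ⟨S.emb.rot d.symm, he1p, he3p⟩
  -- symmetry of CrossPair
  have hsymmCP : ∀ (x : X) (a b : V), CrossPair S.emb.rot x a b → CrossPair S.emb.rot x b a := by
    rintro x a b ⟨e, he, he2⟩
    have h4 : S.emb.rot (S.emb.rot (S.emb.rot (S.emb.rot e))) = e :=
      hrot4 e x (by rw [he])
    exact ⟨S.emb.rot (S.emb.rot e), he2, by rw [h4, he]⟩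
  -- distinctness of consecutive darts at u
  have hne1 : ∀ d : H.Dart, d.toProd.1 = Sum.inl u → S.emb.rot d ≠ d := by
    intro d hd hcon
    obtain ⟨x, w, w', hx, hw, hw', cp⟩ := key d hd
    rw [hcon, hw] at hw'
    have hadj : G.Adj w w' := (S.adj_iff w w').mpr (Or.inr ⟨x, cp⟩)
    exact hadj.ne (Sum.inl_injective hw')
  have hne2 : ∀ d : H.Dart, d.toProd.1 = Sum.inl u → S.emb.rot (S.emb.rot d) ≠ d := by
    intro d hd hcon
    obtain ⟨x, w, w', hx, hw, hw', cp⟩ := key d hd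
    have hd2 : (S.emb.rot d).toProd.1 = Sum.inl u := by rw [htail, hd]
    obtain ⟨x', w₁, w₂, hx', hw₁, hw₂, cp'⟩ := key (S.emb.rot d) hd2
    have e1 : w' = w₁ := Sum.inl_injective (hw'.symm.trans hw₁)
    rw [hcon, hw] at hw₂
    have e2 : w = w₂ := Sum.inl_injective hw₂
    rw [← e1, ← e2] at cp'
    have cp'' := hsymmCP x' w' w cp'
    have hxx : x = x' := S.cross_unique x x' w w' cp cp''
    have hdd : S.emb.rot d = d := by
      apply SimpleGraph.Dart.ext
      rw [Prod.ext_iff]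
      exact ⟨by rw [htail], by rw [hx', ← hxx, ← hx]⟩
    exact hne1 d hd hdd
  have hne3 : ∀ d : H.Dart, d.toProd.1 = Sum.inl u →
      S.emb.rot (S.emb.rot (S.emb.rot d)) ≠ d := by
    intro d hd hcon
    have hd2 : (S.emb.rot d).toProd.1 = Sum.inl u := by rw [htail, hd]
    have hd3 : (S.emb.rot (S.emb.rot d)).toProd.1 = Sum.inl u := by rw [htail, hd2]
    obtain ⟨x0, w0, a, hx0, hw0, ha, cp0⟩ := key d hd
    obtain ⟨x1, b, c, hx1, hb, hc, cp1⟩ := key (S.emb.rot d) hd2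
    obtain ⟨x2, e, f, hx2, he, hf, cp2⟩ := key (S.emb.rot (S.emb.rot d)) hd3
    have eab : a = b := Sum.inl_injective (ha.symm.trans hb)
    have ece : c = e := Sum.inl_injective (hc.symm.trans he)
    rw [hcon, hw0] at hf
    have efw : w0 = f := Sum.inl_injective hf
    have adj1 : G.Adj w0 a := (S.adj_iff w0 a).mpr (Or.inr ⟨x0, cp0⟩)
    have adj2 : G.Adj a c := by
      rw [eab]
      exact (S.adj_iff b c).mpr (Or.inr ⟨x1, cp1⟩)
    have adj3 : G.Adj c w0 := by
      rw [ece]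
      have := (S.adj_iff e f).mpr (Or.inr ⟨x2, cp2⟩)
      rwa [← efw] at this
    exact hK3 {w0, a, c} (SimpleGraph.is3Clique_triple_iff.mpr ⟨adj1, adj3.symm, adj2⟩)
  -- each dart at u yields a crossed edge of G at u
  have vkey : ∀ d : H.Dart, d.toProd.1 = Sum.inl u → ∃ v : V, G.Adj u v ∧ ∃ x : X,
      d.toProd.2 = Sum.inr x ∧ CrossPair S.emb.rot x u v := by
    intro d hd
    obtain ⟨x, hx⟩ := hheadfake d hd
    have he0p : d.symm.toProd = (Sum.inr x, Sum.inl u) := by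
      rw [Prod.ext_iff]
      exact ⟨by simpa using hx, by simpa using hd⟩
    have ht2 : (S.emb.rot (S.emb.rot d.symm)).toProd.1 = Sum.inr x := by
      rw [htail, htail, he0p]
    cases hv : (S.emb.rot (S.emb.rot d.symm)).toProd.2 with
    | inl v =>
      have cp : CrossPair S.emb.rot x u v :=
        ⟨d.symm, he0p, Prod.ext_iff.mpr ⟨ht2, hv⟩⟩
      exact ⟨v, (S.adj_iff u v).mpr (Or.inr ⟨x, cp⟩), x, hx, cp⟩
    | inr y =>
      have hadj := (S.emb.rot (S.emb.rot d.symm)).adj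
      rw [show (S.emb.rot (S.emb.rot d.symm)).fst =
        (S.emb.rot (S.emb.rot d.symm)).toProd.1 from rfl, ht2] at hadj
      rw [show (S.emb.rot (S.emb.rot d.symm)).snd =
        (S.emb.rot (S.emb.rot d.symm)).toProd.2 from rfl, hv] at hadj
      exact absurd hadj (S.fake_not_adjacent x y)
  -- the injection from darts at u to neighbours of u
  have hcard1 : Nat.card {d : H.Dart // d.toProd.1 = Sum.inl u} ≤
      Nat.card (G.neighborSet u) := by
    have : ∀ p : {d : H.Dart // d.toProd.1 = Sum.inl u},
        (vkey p.1 p.2).choose ∈ G.neighborSet u := fun p => (vkey p.1 p.2).choose_spec.1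
    apply Nat.card_le_card_of_injective
      (fun p => (⟨(vkey p.1 p.2).choose, this p⟩ : G.neighborSet u))
    rintro ⟨d, hd⟩ ⟨d', hd'⟩ hf
    obtain ⟨hadj, x, hx, cp⟩ := (vkey d hd).choose_spec
    obtain ⟨hadj', x', hx', cp'⟩ := (vkey d' hd').choose_spec
    simp only [Subtype.mk.injEq] at hf ⊢
    rw [hf] at cp
    have hxx : x = x' := S.cross_unique x x' u _ cp cp'
    apply SimpleGraph.Dart.ext
    rw [Prod.ext_iff]
    exact ⟨hd.trans hd'.symm, by rw [hx, hxx, ← hx']⟩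
  -- there are at least 4 darts at u
  obtain ⟨F, hF, d0, hd0F, hd0⟩ := hinc
  have hd1 : (S.emb.rot d0).toProd.1 = Sum.inl u := by rw [htail, hd0]
  have hd2 : (S.emb.rot (S.emb.rot d0)).toProd.1 = Sum.inl u := by rw [htail, hd1]
  have hd3 : (S.emb.rot (S.emb.rot (S.emb.rot d0))).toProd.1 = Sum.inl u := by rw [htail, hd2]
  have h01 := hne1 d0 hd0
  have h02 := hne2 d0 hd0
  have h03 := hne3 d0 hd0
  have h12 := hne1 _ hd1
  have h13 := hne2 _ hd1
  have h23 := hne1 _ hd2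
  have hcard2 : 4 ≤ Nat.card {d : H.Dart // d.toProd.1 = Sum.inl u} := by
    have hnm3 : S.emb.rot (S.emb.rot d0) ∉
        ({S.emb.rot (S.emb.rot (S.emb.rot d0))} : Finset H.Dart) := by
      simp only [Finset.mem_singleton]
      exact fun h => h23 h.symm
    have hnm2 : S.emb.rot d0 ∉ ({S.emb.rot (S.emb.rot d0),
        S.emb.rot (S.emb.rot (S.emb.rot d0))} : Finset H.Dart) := by
      simp only [Finset.mem_insert, Finset.mem_singleton]
      rintro (h | h)
      · exact h12 h.symm
      · exact h13 h.symm
    have hnm1 : d0 ∉ ({S.emb.rot d0, S.emb.rot (S.emb.rot d0),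
        S.emb.rot (S.emb.rot (S.emb.rot d0))} : Finset H.Dart) := by
      simp only [Finset.mem_insert, Finset.mem_singleton]
      rintro (h | h | h)
      · exact h01 h.symm
      · exact h02 h.symm
      · exact h03 h.symm
    have hc4 : ({d0, S.emb.rot d0, S.emb.rot (S.emb.rot d0),
        S.emb.rot (S.emb.rot (S.emb.rot d0))} : Finset H.Dart).card = 4 := by
      rw [Finset.card_insert_of_notMem hnm1, Finset.card_insert_of_notMem hnm2,
        Finset.card_insert_of_notMem hnm3, Finset.card_singleton]
    have hsub : (↑({d0, S.emb.rot d0, S.emb.rot (S.emb.rot d0),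
        S.emb.rot (S.emb.rot (S.emb.rot d0))} : Finset H.Dart) : Set H.Dart) ⊆
        {d : H.Dart | d.toProd.1 = Sum.inl u} := by
      intro d hdm
      simp only [Finset.coe_insert, Set.mem_insert_iff, Finset.coe_singleton,
        Set.mem_singleton_iff] at hdm
      rcases hdm with rfl | rfl | rfl | rfl
      · exact hd0
      · exact hd1
      · exact hd2
      · exact hd3
    have : (4 : ℕ) ≤ ({d : H.Dart | d.toProd.1 = Sum.inl u}).ncard := by
      calc (4 : ℕ) = ({d0, S.emb.rot d0, S.emb.rot (S.emb.rot d0),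
            S.emb.rot (S.emb.rot (S.emb.rot d0))} : Finset H.Dart).card := hc4.symm
        _ = (↑({d0, S.emb.rot d0, S.emb.rot (S.emb.rot d0),
            S.emb.rot (S.emb.rot (S.emb.rot d0))} : Finset H.Dart) : Set H.Dart).ncard :=
          (Set.ncard_coe_finset _).symm
        _ ≤ _ := Set.ncard_le_ncard hsub (Set.toFinite _)
    rw [← Nat.card_coe_set_eq] at this
    exact this
  exact hcard2.trans hcard1
end

section
/- Let G be a K5-free simple graph containing four distinct pairwise adjacent vertices u₁, u₂, u₃, u₄. Let G′ be the graph obtained from G by deleting the edges u₁u₃ and u₂u₄, adding four new vertices v₁, v₂, v₃, v₄, adding the cycle edges v₁v₂, v₂v₃, v₃v₄, v₄v₁, and adding, for each i ∈ {1,2,3,4}, the edges uᵢv_{i−1}, uᵢvᵢ, and uᵢv_{i+1}, where the indices of the v's are taken modulo 4 (so v₀ = v₄ and v₅ = v₁). Then G′ is K5-free. -/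
/-- The adjacency relation of the graph `G′` obtained from `G` by the `Q₄`-addition at the
4-clique `u 0, u 1, u 2, u 3`: delete the edges `u 0 – u 2` and `u 1 – u 3`, add four new
vertices `v i` (`i : Fin 4`) forming a 4-cycle `v 0 v 1 v 2 v 3`, and join each `u i` to
`v (i−1)`, `v i` and `v (i+1)` (indices of the new vertices taken modulo 4). -/
def q4Rel {V : Type*} (G : SimpleGraph V) (u : Fin 4 → V) :
    V ⊕ Fin 4 → V ⊕ Fin 4 → Prop
  | Sum.inl a, Sum.inl b => G.Adj a b ∧
      ¬((a = u 0 ∧ b = u 2) ∨ (a = u 2 ∧ b = u 0) ∨ (a = u 1 ∧ b = u 3) ∨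
        (a = u 3 ∧ b = u 1))
  | Sum.inl a, Sum.inr i => a = u (i - 1) ∨ a = u i ∨ a = u (i + 1)
  | Sum.inr _, Sum.inl _ => False
  | Sum.inr i, Sum.inr j => j = i + 1

/-- The graph `G′` obtained from `G` by the `Q₄`-addition at `u 0, u 1, u 2, u 3`. -/
def q4Addition {V : Type*} (G : SimpleGraph V) (u : Fin 4 → V) :
    SimpleGraph (V ⊕ Fin 4) :=
  SimpleGraph.fromRel (q4Rel G u)

lemma card_four_le {α : Type*} [DecidableEq α] (a b c d : α) :
    ({a, b, c, d} : Finset α).card ≤ 4 := by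
  refine (Finset.card_insert_le _ _).trans (Nat.add_le_add_right ?_ 1)
  refine (Finset.card_insert_le _ _).trans (Nat.add_le_add_right ?_ 1)
  refine (Finset.card_insert_le _ _).trans (Nat.add_le_add_right ?_ 1)
  simp

/-- Let `G` be a `K₅`-free simple graph containing four distinct pairwise adjacent vertices
`u 0, u 1, u 2, u 3`.  Then the graph `G′` obtained from `G` by the `Q₄`-addition (deleting
the edges `u 0 – u 2` and `u 1 – u 3`, inserting a 4-cycle on four new vertices
`v 0, v 1, v 2, v 3`, and joining each `u i` to `v (i−1)`, `v i`, `v (i+1)`) is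
`K₅`-free. -/
theorem q4Addition_cliqueFree_five {V : Type*} (G : SimpleGraph V) (u : Fin 4 → V)
    (hdist : Function.Injective u)
    (hadj : ∀ i j : Fin 4, i ≠ j → G.Adj (u i) (u j))
    (hK5 : G.CliqueFree 5) :
    (q4Addition G u).CliqueFree 5 := by
  classical
  intro s hs
  obtain ⟨hclique, hcard⟩ := hs
  rw [SimpleGraph.isClique_iff] at hclique
  by_cases hnew : ∃ i : Fin 4, Sum.inr i ∈ s
  · obtain ⟨i, hi⟩ := hnew
    -- every element of the clique is in a small set
    have hmem : ∀ x ∈ s, x = Sum.inr i ∨ x = Sum.inr (i - 1) ∨ x = Sum.inr (i + 1) ∨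
        x = Sum.inl (u (i - 1)) ∨ x = Sum.inl (u i) ∨ x = Sum.inl (u (i + 1)) := by
      intro x hx
      by_cases hxe : x = Sum.inr i
      · exact Or.inl hxe
      have hadj' := hclique hx hi hxe
      rw [q4Addition, SimpleGraph.fromRel_adj] at hadj'
      obtain ⟨-, h | h⟩ := hadj'
      · cases x with
        | inl a =>
          simp only [q4Rel] at h
          rcases h with h | h | h
          · exact Or.inr (Or.inr (Or.inr (Or.inl (by rw [h]))))
          · exact Or.inr (Or.inr (Or.inr (Or.inr (Or.inl (by rw [h])))))
          · exact Or.inr (Or.inr (Or.inr (Or.inr (Or.inr (by rw [h])))))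
        | inr j =>
          simp only [q4Rel] at h
          refine Or.inr (Or.inl ?_)
          have : j = i - 1 := by rw [h]; simp
          rw [this]
      · cases x with
        | inl a => simp only [q4Rel] at h
        | inr j =>
          simp only [q4Rel] at h
          exact Or.inr (Or.inr (Or.inl (by rw [h])))
    -- the two `inr` neighbours of `inr i` are not adjacent
    have hnot1 : Sum.inr (i - 1) ∉ s ∨ Sum.inr (i + 1) ∉ s := by
      by_contra hcon
      push_neg at hcon
      obtain ⟨h1, h2⟩ := hcon
      have hd1 : ∀ j : Fin 4, j - 1 ≠ j + 1 := by decide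
      have hd2 : ∀ j : Fin 4, ¬ (j + 1 = j - 1 + 1) := by decide
      have hd3 : ∀ j : Fin 4, ¬ (j - 1 = j + 1 + 1) := by decide
      have hne : (Sum.inr (i - 1) : V ⊕ Fin 4) ≠ Sum.inr (i + 1) := by
        simp [hd1 i]
      have hadj' := hclique h1 h2 hne
      rw [q4Addition, SimpleGraph.fromRel_adj] at hadj'
      obtain ⟨-, h | h⟩ := hadj' <;> simp only [q4Rel] at h
      · exact hd2 i h
      · exact hd3 i h
    -- the two `u` neighbours `u (i-1)` and `u (i+1)` are not adjacent in G'
    have hnot2 : Sum.inl (u (i - 1)) ∉ s ∨ Sum.inl (u (i + 1)) ∉ s := by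
      by_contra hcon
      push_neg at hcon
      obtain ⟨h1, h2⟩ := hcon
      have hd1 : ∀ j : Fin 4, j - 1 ≠ j + 1 := by decide
      have hne : (Sum.inl (u (i - 1)) : V ⊕ Fin 4) ≠ Sum.inl (u (i + 1)) := by
        simp [hdist.ne (hd1 i)]
      have hadj' := hclique h1 h2 hne
      rw [q4Addition, SimpleGraph.fromRel_adj] at hadj'
      have hidx' : ∀ j : Fin 4, ((j - 1 = 0 ∧ j + 1 = 2) ∨ (j - 1 = 2 ∧ j + 1 = 0) ∨
          (j - 1 = 1 ∧ j + 1 = 3) ∨ (j - 1 = 3 ∧ j + 1 = 1)) := by decide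
      have hidx := hidx' i
      obtain ⟨-, h | h⟩ := hadj' <;> simp only [q4Rel] at h
      · refine h.2 ?_
        rcases hidx with ⟨h1', h2'⟩ | ⟨h1', h2'⟩ | ⟨h1', h2'⟩ | ⟨h1', h2'⟩
        · exact Or.inl ⟨by rw [h1'], by rw [h2']⟩
        · exact Or.inr (Or.inl ⟨by rw [h1'], by rw [h2']⟩)
        · exact Or.inr (Or.inr (Or.inl ⟨by rw [h1'], by rw [h2']⟩))
        · exact Or.inr (Or.inr (Or.inr ⟨by rw [h1'], by rw [h2']⟩))
      · refine h.2 ?_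
        rcases hidx with ⟨h1', h2'⟩ | ⟨h1', h2'⟩ | ⟨h1', h2'⟩ | ⟨h1', h2'⟩
        · exact Or.inr (Or.inl ⟨by rw [h2'], by rw [h1']⟩)
        · exact Or.inl ⟨by rw [h2'], by rw [h1']⟩
        · exact Or.inr (Or.inr (Or.inr ⟨by rw [h2'], by rw [h1']⟩))
        · exact Or.inr (Or.inr (Or.inl ⟨by rw [h2'], by rw [h1']⟩))
    -- hence s has at most 4 elements, contradiction
    have hle : s.card ≤ 4 := by
      rcases hnot1 with h1 | h1 <;> rcases hnot2 with h2 | h2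
      · refine le_trans (Finset.card_le_card (fun x hx => ?_)) (card_four_le
          (Sum.inr i) (Sum.inr (i + 1)) (Sum.inl (u i)) (Sum.inl (u (i + 1))))
        rcases hmem x hx with h | h | h | h | h | h <;>
          first
            | (subst h; exact absurd hx h1)
            | (subst h; exact absurd hx h2)
            | (subst h; simp)
      · refine le_trans (Finset.card_le_card (fun x hx => ?_)) (card_four_le
          (Sum.inr i) (Sum.inr (i + 1)) (Sum.inl (u (i - 1))) (Sum.inl (u i)))
        rcases hmem x hx with h | h | h | h | h | h <;>
          first
            | (subst h; exact absurd hx h1)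
            | (subst h; exact absurd hx h2)
            | (subst h; simp)
      · refine le_trans (Finset.card_le_card (fun x hx => ?_)) (card_four_le
          (Sum.inr i) (Sum.inr (i - 1)) (Sum.inl (u i)) (Sum.inl (u (i + 1))))
        rcases hmem x hx with h | h | h | h | h | h <;>
          first
            | (subst h; exact absurd hx h1)
            | (subst h; exact absurd hx h2)
            | (subst h; simp)
      · refine le_trans (Finset.card_le_card (fun x hx => ?_)) (card_four_le
          (Sum.inr i) (Sum.inr (i - 1)) (Sum.inl (u (i - 1))) (Sum.inl (u i)))
        rcases hmem x hx with h | h | h | h | h | h <;>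
          first
            | (subst h; exact absurd hx h1)
            | (subst h; exact absurd hx h2)
            | (subst h; simp)
    omega
  · -- no new vertex: the clique lives in `G`
    push_neg at hnew
    have hall : ∀ x ∈ s, ∃ a : V, x = Sum.inl a := by
      intro x hx
      cases x with
      | inl a => exact ⟨a, rfl⟩
      | inr j => exact absurd hx (hnew j)
    set f : V ⊕ Fin 4 → V := Sum.elim id (fun _ => u 0) with hf
    refine hK5 (s.image f) ⟨?_, ?_⟩
    · rw [SimpleGraph.isClique_iff]
      intro a ha b hb hab
      simp only [Finset.mem_coe, Finset.mem_image] at ha hb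
      obtain ⟨x, hx, hxa⟩ := ha
      obtain ⟨y, hy, hyb⟩ := hb
      obtain ⟨a', rfl⟩ := hall x hx
      obtain ⟨b', rfl⟩ := hall y hy
      simp only [hf, Sum.elim_inl, id] at hxa hyb
      subst hxa; subst hyb
      have hadj' := hclique hx hy (fun hh => hab (Sum.inl.inj hh))
      rw [q4Addition, SimpleGraph.fromRel_adj] at hadj'
      obtain ⟨-, h | h⟩ := hadj' <;> simp only [q4Rel] at h
      · exact h.1
      · exact h.1.symm
    · rw [Finset.card_image_of_injOn, hcard]
      intro x hx y hy hxy
      obtain ⟨a', rfl⟩ := hall x hx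
      obtain ⟨b', rfl⟩ := hall y hy
      simp only [hf, Sum.elim_inl, id] at hxy
      rw [hxy]
end
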